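/- arXiv:2508.21038 — 3 statements merged into one kernel-verified Lean document; each statement's English description precedes it below -/
import Mathlib

section
/- For every binary matrix A ∈ {0,1}^{m×n}, the following chain of inequalities holds: rank_±(2A − 1_{m×n}) − 1 ≤ rank_rop A = rank_rt A ≤ rank_gt A ≤ rank_±(2A − 1_{m×n}). -/
open Matrix

/-- `A` is a binary (0/1) matrix. -/
def IsBinary {m n : ℕ} (A : Matrix (Fin m) (Fin n) ℝ) : Prop :=
  ∀ i j, A i j = 0 ∨ A i j = 1

/-- `B` is row-wise order-preserving for `A`. -/
def RowOP {m n : ℕ} (A B : Matrix (Fin m) (Fin n) ℝ) : Prop :=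
  ∀ i j k, A i j > A i k → B i j > B i k

/-- `B` is row-wise thresholdable for `A` with row thresholds `τ`. -/
def RowThreshWith {m n : ℕ} (A B : Matrix (Fin m) (Fin n) ℝ) (τ : Fin m → ℝ) : Prop :=
  ∀ i j, (A i j = 1 → B i j > τ i) ∧ (A i j = 0 → B i j < τ i)

/-- `B` is globally thresholdable for `A` with threshold `τ`. -/
def GlobThreshWith {m n : ℕ} (A B : Matrix (Fin m) (Fin n) ℝ) (τ : ℝ) : Prop :=
  ∀ i j, (A i j = 1 → B i j > τ) ∧ (A i j = 0 → B i j < τ)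

/-- Row-wise order-preserving rank of `A`. -/
noncomputable def ropRank {m n : ℕ} (A : Matrix (Fin m) (Fin n) ℝ) : ℕ :=
  sInf { r | ∃ B : Matrix (Fin m) (Fin n) ℝ, RowOP A B ∧ B.rank = r }

/-- Row-wise thresholdable rank of `A`. -/
noncomputable def rtRank {m n : ℕ} (A : Matrix (Fin m) (Fin n) ℝ) : ℕ :=
  sInf { r | ∃ (B : Matrix (Fin m) (Fin n) ℝ) (τ : Fin m → ℝ),
    RowThreshWith A B τ ∧ B.rank = r }

/-- Globally thresholdable rank of `A`. -/
noncomputable def gtRank {m n : ℕ} (A : Matrix (Fin m) (Fin n) ℝ) : ℕ :=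
  sInf { r | ∃ (B : Matrix (Fin m) (Fin n) ℝ) (τ : ℝ),
    GlobThreshWith A B τ ∧ B.rank = r }

/-- Sign rank of a `±1` matrix `M`: the minimum rank of a real matrix whose
entries have the same sign as those of `M`. -/
noncomputable def signRank {m n : ℕ} (M : Matrix (Fin m) (Fin n) ℝ) : ℕ :=
  sInf { r | ∃ B : Matrix (Fin m) (Fin n) ℝ,
    (∀ i j, Real.sign (B i j) = M i j) ∧ B.rank = r }

/-- The `±1` matrix `2A - 1ₘₓₙ` associated to a binary matrix `A`
(`1ₘₓₙ` is the all-ones matrix). -/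
def signMat {m n : ℕ} (A : Matrix (Fin m) (Fin n) ℝ) : Matrix (Fin m) (Fin n) ℝ :=
  Matrix.of fun i j => 2 * A i j - 1

/-- Subadditivity of matrix rank. -/
lemma my_matrix_rank_add_le {m n : ℕ} (B C : Matrix (Fin m) (Fin n) ℝ) :
    (B + C).rank ≤ B.rank + C.rank := by
  classical
  have hr : LinearMap.range (B + C).mulVecLin ≤
      LinearMap.range B.mulVecLin ⊔ LinearMap.range C.mulVecLin := by
    rw [Matrix.mulVecLin_add]
    rintro x ⟨v, rfl⟩
    exact Submodule.mem_sup.2 ⟨B.mulVecLin v, ⟨v, rfl⟩, C.mulVecLin v, ⟨v, rfl⟩, rfl⟩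
  calc (B + C).rank
      ≤ Module.finrank ℝ ↥(LinearMap.range B.mulVecLin ⊔ LinearMap.range C.mulVecLin) :=
        Submodule.finrank_mono hr
    _ ≤ B.rank + C.rank := Submodule.finrank_add_le_finrank_add_finrank _ _

lemma my_rank_outer_le_one {m n : ℕ} (w : Fin m → ℝ) (v : Fin n → ℝ) :
    (Matrix.vecMulVec w v).rank ≤ 1 := by
  rw [Matrix.vecMulVec_eq (Fin 1)]
  refine (Matrix.rank_mul_le_left _ _).trans ?_
  have := Matrix.rank_le_card_width (Matrix.replicateCol (Fin 1) w)
  simp only [Fintype.card_unique] at this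
  exact this

/-- A row-order-preserving matrix for a binary `A` is row-thresholdable. -/
lemma exists_tau {m n : ℕ} {A B : Matrix (Fin m) (Fin n) ℝ} (hA : IsBinary A)
    (hB : RowOP A B) : ∃ τ, RowThreshWith A B τ := by
  classical
  have h : ∀ i, ∃ t : ℝ, ∀ j, (A i j = 1 → B i j > t) ∧ (A i j = 0 → B i j < t) := by
    intro i
    by_cases h1 : ∃ j, A i j = 1
    · by_cases h0 : ∃ j, A i j = 0
      · obtain ⟨j1, hj1⟩ := h1
        obtain ⟨j0, hj0⟩ := h0
        set s0 : Finset (Fin n) := Finset.univ.filter (fun j => A i j = 0) with hs0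
        set s1 : Finset (Fin n) := Finset.univ.filter (fun j => A i j = 1) with hs1
        have hs0ne : s0.Nonempty := ⟨j0, by simp [hs0, hj0]⟩
        have hs1ne : s1.Nonempty := ⟨j1, by simp [hs1, hj1]⟩
        set M0 := s0.sup' hs0ne (B i) with hM0
        set M1 := s1.inf' hs1ne (B i) with hM1
        have hlt : M0 < M1 := by
          rw [hM0, Finset.sup'_lt_iff]
          intro j hj
          rw [hM1, Finset.lt_inf'_iff]
          intro k hk
          have hj' : A i j = 0 := by simpa [hs0] using hj
          have hk' : A i k = 1 := by simpa [hs1] using hk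
          exact hB i k j (by rw [hj', hk']; norm_num)
        refine ⟨(M0 + M1) / 2, fun j => ⟨fun hj => ?_, fun hj => ?_⟩⟩
        · have : M1 ≤ B i j := Finset.inf'_le _ (by simp [hs1, hj])
          linarith
        · have : B i j ≤ M0 := Finset.le_sup' _ (by simp [hs0, hj])
          linarith
      · obtain ⟨j1, hj1⟩ := h1
        have huniv : (Finset.univ : Finset (Fin n)).Nonempty := ⟨j1, Finset.mem_univ _⟩
        refine ⟨Finset.univ.inf' huniv (B i) - 1, fun j => ⟨fun _ => ?_, fun hj => ?_⟩⟩
        · have : Finset.univ.inf' huniv (B i) ≤ B i j := Finset.inf'_le _ (Finset.mem_univ _)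
          linarith
        · exact absurd ⟨j, hj⟩ h0
    · by_cases h0 : ∃ j, A i j = 0
      · obtain ⟨j0, hj0⟩ := h0
        have huniv : (Finset.univ : Finset (Fin n)).Nonempty := ⟨j0, Finset.mem_univ _⟩
        refine ⟨Finset.univ.sup' huniv (B i) + 1, fun j => ⟨fun hj => ?_, fun _ => ?_⟩⟩
        · exact absurd ⟨j, hj⟩ h1
        · have : B i j ≤ Finset.univ.sup' huniv (B i) := Finset.le_sup' _ (Finset.mem_univ _)
          linarith
      · exact ⟨0, fun j => ⟨fun hj => absurd ⟨j, hj⟩ h1, fun hj => absurd ⟨j, hj⟩ h0⟩⟩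
  choose τ hτ using h
  exact ⟨τ, fun i j => hτ i j⟩

lemma sign_pos_of_eq_one {x : ℝ} (h : Real.sign x = 1) : 0 < x := by
  rcases lt_trichotomy x 0 with h' | h' | h'
  · rw [Real.sign_of_neg h'] at h; norm_num at h
  · rw [h', Real.sign_zero] at h; norm_num at h
  · exact h'

lemma sign_neg_of_eq_neg_one {x : ℝ} (h : Real.sign x = -1) : x < 0 := by
  rcases lt_trichotomy x 0 with h' | h' | h'
  · exact h'
  · rw [h', Real.sign_zero] at h; norm_num at h
  · rw [Real.sign_of_pos h'] at h; norm_num at h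

theorem rank_inequality_chain {m n : ℕ} (A : Matrix (Fin m) (Fin n) ℝ)
    (hA : IsBinary A) :
    signRank (signMat A) - 1 ≤ ropRank A ∧
      ropRank A = rtRank A ∧
      rtRank A ≤ gtRank A ∧
      gtRank A ≤ signRank (signMat A) := by
  classical
  -- the rop set is nonempty (A itself works)
  have hrop_ne : { r | ∃ B : Matrix (Fin m) (Fin n) ℝ, RowOP A B ∧ B.rank = r }.Nonempty :=
    ⟨A.rank, A, fun i j k h => h, rfl⟩
  -- the sign set is nonempty (signMat A itself)
  have hsign_mem : ∀ i j, Real.sign (signMat A i j) = signMat A i j := by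
    intro i j
    rcases hA i j with h | h <;> simp only [signMat, Matrix.of_apply, h]
    · norm_num [Real.sign_of_neg]
    · norm_num [Real.sign_of_pos]
  have hsign_ne : { r | ∃ B : Matrix (Fin m) (Fin n) ℝ,
      (∀ i j, Real.sign (B i j) = signMat A i j) ∧ B.rank = r }.Nonempty :=
    ⟨(signMat A).rank, signMat A, hsign_mem, rfl⟩
  -- the gt set is nonempty (signMat A with threshold 0)
  have hgt_ne : { r | ∃ (B : Matrix (Fin m) (Fin n) ℝ) (τ : ℝ),
      GlobThreshWith A B τ ∧ B.rank = r }.Nonempty := by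
    refine ⟨(signMat A).rank, signMat A, 0, fun i j => ⟨fun h => ?_, fun h => ?_⟩, rfl⟩
    · simp only [signMat, Matrix.of_apply, h]; norm_num
    · simp only [signMat, Matrix.of_apply, h]; norm_num
  -- ropRank = rtRank : the two sets coincide
  have heq : ropRank A = rtRank A := by
    unfold ropRank rtRank
    congr 1
    ext r
    constructor
    · rintro ⟨B, hB, hr⟩
      obtain ⟨τ, hτ⟩ := exists_tau hA hB
      exact ⟨B, τ, hτ, hr⟩
    · rintro ⟨B, τ, hτ, hr⟩
      refine ⟨B, fun i j k h => ?_, hr⟩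
      rcases hA i j with hj | hj <;> rcases hA i k with hk | hk <;>
        rw [hj, hk] at h <;> try norm_num at h
      exact lt_trans ((hτ i k).2 hk) ((hτ i j).1 hj)
  -- rtRank ≤ gtRank
  have h23 : rtRank A ≤ gtRank A := by
    obtain ⟨B, τ, hg, hr⟩ := Nat.sInf_mem hgt_ne
    calc rtRank A ≤ B.rank := Nat.sInf_le ⟨B, fun _ => τ, fun i j => hg i j, rfl⟩
      _ = gtRank A := hr
  -- gtRank ≤ signRank
  have h34 : gtRank A ≤ signRank (signMat A) := by
    obtain ⟨B, hs, hr⟩ := Nat.sInf_mem hsign_ne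
    have hmem : B.rank ∈ { r | ∃ (B : Matrix (Fin m) (Fin n) ℝ) (τ : ℝ),
        GlobThreshWith A B τ ∧ B.rank = r } := by
      refine ⟨B, 0, fun i j => ⟨fun h => ?_, fun h => ?_⟩, rfl⟩
      · refine sign_pos_of_eq_one ?_
        rw [hs i j]; simp only [signMat, Matrix.of_apply, h]; norm_num
      · refine sign_neg_of_eq_neg_one ?_
        rw [hs i j]; simp only [signMat, Matrix.of_apply, h]; norm_num
    calc gtRank A ≤ B.rank := Nat.sInf_le hmem
      _ = signRank (signMat A) := hr
  -- signRank - 1 ≤ ropRank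
  have h12 : signRank (signMat A) - 1 ≤ ropRank A := by
    obtain ⟨B, hB, hr⟩ := Nat.sInf_mem hrop_ne
    obtain ⟨τ, hτ⟩ := exists_tau hA hB
    set C : Matrix (Fin m) (Fin n) ℝ :=
      B + Matrix.vecMulVec (fun i => -τ i) (fun _ => (1 : ℝ)) with hC
    have hCval : ∀ i j, C i j = B i j - τ i := by
      intro i j
      simp [hC, Matrix.vecMulVec_apply]
      ring
    have hCsign : ∀ i j, Real.sign (C i j) = signMat A i j := by
      intro i j
      rcases hA i j with h | h
      · have : C i j < 0 := by rw [hCval]; have := (hτ i j).2 h; linarith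
        rw [Real.sign_of_neg this]
        simp [signMat, h]
      · have : 0 < C i j := by rw [hCval]; have := (hτ i j).1 h; linarith
        rw [Real.sign_of_pos this]
        simp [signMat, h]; norm_num
    have hr' : B.rank = ropRank A := hr
    have hCrank : C.rank ≤ B.rank + 1 := by
      calc C.rank ≤ B.rank + (Matrix.vecMulVec (fun i => -τ i) (fun _ => (1 : ℝ))).rank :=
            my_matrix_rank_add_le _ _
        _ ≤ B.rank + 1 := by
            have := my_rank_outer_le_one (fun i => -τ i) (fun _ : Fin n => (1 : ℝ))
            omega
    have hle : signRank (signMat A) ≤ C.rank := Nat.sInf_le ⟨C, hCsign, rfl⟩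
    omega
  exact ⟨h12, heq, h23, h34⟩
end

section
/- Let A ∈ {0,1}^{m×n} be a binary matrix and suppose there exist an integer d and vectors u_1, …, u_m ∈ ℝ^d and v_1, …, v_n ∈ ℝ^d such that the score matrix B with B_{ij} = ⟨u_i, v_j⟩ is row-wise order-preserving for A (for all i, j, k, A_{ij} > A_{ik} implies ⟨u_i, v_j⟩ > ⟨u_i, v_k⟩). Then there exists a real matrix C ∈ ℝ^{m×n} of rank at most d + 1 such that C_{ij} > 0 when A_{ij} = 1 and C_{ij} < 0 when A_{ij} = 0; that is, the sign rank of 2A − 1_{m×n} is at most d + 1. -/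
open Matrix

theorem embedding_dim_bounds_signRank {m n : ℕ} (A : Matrix (Fin m) (Fin n) ℝ)
    (hA : IsBinary A) (d : ℕ) (u : Fin m → Fin d → ℝ) (v : Fin n → Fin d → ℝ)
    (h : RowOP A (Matrix.of fun i j => u i ⬝ᵥ v j)) :
    (∃ C : Matrix (Fin m) (Fin n) ℝ, C.rank ≤ d + 1 ∧
        ∀ i j, (A i j = 1 → C i j > 0) ∧ (A i j = 0 → C i j < 0)) ∧
      signRank (signMat A) ≤ d + 1 := by
  classical
  set B : Matrix (Fin m) (Fin n) ℝ := Matrix.of fun i j => u i ⬝ᵥ v j with hB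
  set s1 : Fin m → Finset (Fin n) := fun i => Finset.univ.filter (fun j => A i j = 1)
  set s0 : Fin m → Finset (Fin n) := fun i => Finset.univ.filter (fun j => A i j = 0)
  -- choose per-row thresholds
  set τ : Fin m → ℝ := fun i =>
    if h1 : (s1 i).Nonempty then
      if h0 : (s0 i).Nonempty then
        ((s1 i).inf' h1 (B i) + (s0 i).sup' h0 (B i)) / 2
      else (s1 i).inf' h1 (B i) - 1
    else if h0 : (s0 i).Nonempty then (s0 i).sup' h0 (B i) + 1 else 0 with hτ
  have key : ∀ i j, (A i j = 1 → B i j > τ i) ∧ (A i j = 0 → B i j < τ i) := by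
    intro i j
    have hsep : ∀ (h1 : (s1 i).Nonempty) (h0 : (s0 i).Nonempty),
        (s0 i).sup' h0 (B i) < (s1 i).inf' h1 (B i) := by
      intro h1 h0
      obtain ⟨j1, hj1, hval1⟩ := (s1 i).exists_mem_eq_inf' h1 (B i)
      obtain ⟨j0, hj0, hval0⟩ := (s0 i).exists_mem_eq_sup' h0 (B i)
      have hA1 : A i j1 = 1 := (Finset.mem_filter.mp hj1).2
      have hA0 : A i j0 = 0 := (Finset.mem_filter.mp hj0).2
      have := h i j1 j0 (by rw [hA1, hA0]; norm_num)
      rw [hval1, hval0]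
      exact this
    constructor
    · intro hAij
      have hj1 : j ∈ s1 i := Finset.mem_filter.mpr ⟨Finset.mem_univ j, hAij⟩
      have h1 : (s1 i).Nonempty := ⟨j, hj1⟩
      have hge : (s1 i).inf' h1 (B i) ≤ B i j := Finset.inf'_le _ hj1
      simp only [hτ, dif_pos h1]
      split_ifs with h0
      · have := hsep h1 h0
        linarith
      · linarith
    · intro hAij
      have hj0 : j ∈ s0 i := Finset.mem_filter.mpr ⟨Finset.mem_univ j, hAij⟩
      have h0 : (s0 i).Nonempty := ⟨j, hj0⟩
      have hle : B i j ≤ (s0 i).sup' h0 (B i) := Finset.le_sup' _ hj0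
      simp only [hτ]
      split_ifs with h1
      · have := hsep h1 h0
        linarith
      · linarith
  -- the rank ≤ d+1 matrix
  set U : Matrix (Fin m) (Fin (d + 1)) ℝ := fun i => Fin.snoc (u i) (-τ i) with hU
  set V : Matrix (Fin (d + 1)) (Fin n) ℝ := fun k j => Fin.snoc (α := fun _ => ℝ) (v j) 1 k with hV
  set C : Matrix (Fin m) (Fin n) ℝ := U * V with hC
  have hCentry : ∀ i j, C i j = B i j - τ i := by
    intro i j
    rw [hC, Matrix.mul_apply]
    simp only [hU, hV]
    rw [Fin.sum_univ_castSucc]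
    simp [Fin.snoc_castSucc, Fin.snoc_last, hB, dotProduct]
    ring
  have hrank : C.rank ≤ d + 1 := by
    calc C.rank ≤ U.rank := Matrix.rank_mul_le_left U V
    _ ≤ d + 1 := Matrix.rank_le_width U
  have hsign : ∀ i j, (A i j = 1 → C i j > 0) ∧ (A i j = 0 → C i j < 0) := by
    intro i j
    rw [hCentry]
    constructor
    · intro hAij; have := (key i j).1 hAij; linarith
    · intro hAij; have := (key i j).2 hAij; linarith
  refine ⟨⟨C, hrank, hsign⟩, ?_⟩
  have hmem : C.rank ∈ { r | ∃ B : Matrix (Fin m) (Fin n) ℝ,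
      (∀ i j, Real.sign (B i j) = signMat A i j) ∧ B.rank = r } := by
    refine ⟨C, fun i j => ?_, rfl⟩
    rcases hA i j with h0 | h1
    · rw [Real.sign_of_neg ((hsign i j).2 h0)]
      simp [signMat, h0]
    · rw [Real.sign_of_pos ((hsign i j).1 h1)]
      simp [signMat, h1]; norm_num
  exact le_trans (Nat.sInf_le hmem) hrank
end

section
/- For every positive integer d there exist positive integers m, n and a binary matrix A ∈ {0,1}^{m×n} such that no real matrix B ∈ ℝ^{m×n} of rank at most d is row-wise order-preserving for A; equivalently, rank_rop A > d, so no d-dimensional vector embedding of the m queries and n documents can order all relevant documents before all irrelevant ones in every row. -/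
open Matrix

/-- The hard matrix: rows enumerate all 0/1 patterns on `d+2` columns. -/
noncomputable def hardA (d : ℕ) : Matrix (Fin (2 ^ (d + 2))) (Fin (d + 2)) ℝ :=
  Matrix.of fun i j => if (finFunctionFinEquiv.symm i j : ℕ) = 1 then 1 else 0

lemma hardA_main (d : ℕ) (B : Matrix (Fin (2 ^ (d + 2))) (Fin (d + 2)) ℝ)
    (hBr : B.rank ≤ d) : ¬ RowOP (hardA d) B := by
  classical
  intro hop
  -- the columns of B, as vectors in ℝ^m
  set c : Fin (d + 2) → (Fin (2 ^ (d + 2)) → ℝ) := fun j i => B i j with hc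
  -- they are affinely dependent
  have hdep : ¬ AffineIndependent ℝ c := by
    intro hai
    have h1 : Module.finrank ℝ (vectorSpan ℝ (Set.range c)) = d + 1 :=
      hai.finrank_vectorSpan (by simp)
    have hsub : vectorSpan ℝ (Set.range c) ≤ LinearMap.range B.mulVecLin := by
      rw [vectorSpan_def, Submodule.span_le]
      rintro x ⟨a, ⟨ja, rfl⟩, b, ⟨jb, rfl⟩, rfl⟩
      have ha : c ja ∈ LinearMap.range B.mulVecLin :=
        ⟨Pi.single ja 1, by ext i; simp [Matrix.mulVecLin, Matrix.mulVec_single, hc]⟩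
      have hb : c jb ∈ LinearMap.range B.mulVecLin :=
        ⟨Pi.single jb 1, by ext i; simp [Matrix.mulVecLin, Matrix.mulVec_single, hc]⟩
      exact Submodule.sub_mem _ ha hb
    have h2 : Module.finrank ℝ (vectorSpan ℝ (Set.range c)) ≤ B.rank :=
      Submodule.finrank_mono hsub
    omega
  obtain ⟨I, p, hpI, hpIc⟩ := Convex.radon_partition hdep
  -- the row of A whose pattern is I
  set f : Fin (d + 2) → Fin 2 := fun j => if j ∈ I then 1 else 0 with hf
  set i : Fin (2 ^ (d + 2)) := finFunctionFinEquiv f with hi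
  have hAi : ∀ j, hardA d i j = if j ∈ I then 1 else 0 := by
    intro j
    simp only [hardA, Matrix.of_apply, hi, Equiv.symm_apply_apply, hf]
    by_cases hj : j ∈ I <;> simp [hj]
  -- I and Iᶜ are nonempty
  have hIne : I.Nonempty := by
    rcases Set.eq_empty_or_nonempty I with h | h
    · simp [h] at hpI
    · exact h
  have hIcne : Iᶜ.Nonempty := by
    rcases Set.eq_empty_or_nonempty Iᶜ with h | h
    · simp [h] at hpIc
    · exact h
  -- threshold
  have hTne : Iᶜ.toFinset.Nonempty := Set.toFinset_nonempty.mpr hIcne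
  set t : ℝ := Iᶜ.toFinset.sup' hTne (fun k => B i k) with ht
  have hgt : ∀ j ∈ I, t < B i j := by
    intro j hj
    obtain ⟨k₀, hk₀, hk₀eq⟩ := Finset.exists_mem_eq_sup' hTne (fun k => B i k)
    rw [ht, hk₀eq]
    apply hop i j k₀
    have hk₀' : k₀ ∈ Iᶜ := Set.mem_toFinset.mp hk₀
    rw [hAi j, hAi k₀, if_pos hj, if_neg hk₀']
    norm_num
  have hle : ∀ k ∈ Iᶜ, B i k ≤ t :=
    fun k hk => Finset.le_sup' (fun k => B i k) (Set.mem_toFinset.mpr hk)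
  -- evaluation at coordinate i is linear
  have hlin : IsLinearMap ℝ (fun v : Fin (2 ^ (d + 2)) → ℝ => v i) :=
    ⟨fun a b => rfl, fun r x => rfl⟩
  have h1 : p i ∈ {v : ℝ | t < v} := by
    have : convexHull ℝ (c '' I) ⊆ {v | t < v i} := by
      apply convexHull_min _ (convex_halfSpace_gt hlin t)
      rintro x ⟨j, hj, rfl⟩
      exact hgt j hj
    exact this hpI
  have h2 : p i ≤ t := by
    have : convexHull ℝ (c '' Iᶜ) ⊆ {v | v i ≤ t} := by
      apply convexHull_min _ (convex_halfSpace_le hlin t)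
      rintro x ⟨k, hk, rfl⟩
      exact hle k hk
    exact this hpIc
  exact absurd h1 (by simp [not_lt.mpr h2])

lemma hardA_binary (d : ℕ) : IsBinary (hardA d) := by
  intro i j
  show (if (finFunctionFinEquiv.symm i j : ℕ) = 1 then (1:ℝ) else 0) = 0 ∨ _ = 1
  by_cases h : (finFunctionFinEquiv.symm i j : ℕ) = 1
  · exact Or.inr (if_pos h)
  · exact Or.inl (if_neg h)

theorem exists_hard_binary_matrix (d : ℕ) (hd : 0 < d) :
    ∃ (m n : ℕ) (A : Matrix (Fin m) (Fin n) ℝ), IsBinary A ∧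
      (∀ B : Matrix (Fin m) (Fin n) ℝ, B.rank ≤ d → ¬ RowOP A B) ∧
      d < ropRank A := by
  refine ⟨2 ^ (d + 2), d + 2, hardA d, hardA_binary d, fun B hB => hardA_main d B hB, ?_⟩
  by_contra h
  push_neg at h
  have hne : {r | ∃ B : Matrix (Fin (2 ^ (d + 2))) (Fin (d + 2)) ℝ,
      RowOP (hardA d) B ∧ B.rank = r}.Nonempty :=
    ⟨(hardA d).rank, hardA d, fun i j k hjk => hjk, rfl⟩
  obtain ⟨B, hB, hr⟩ := Nat.sInf_mem hne
  exact hardA_main d B (hr.symm ▸ h) hB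
end
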